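/- Let u, v be two distinct top vertices (u drawn above v), B a finite bottom set, and Adj a function assigning to each b ∈ B a subset Adj(b) ⊆ {u,v}; let k be the number of b ∈ B with Adj(b) = {u,v}. Then for every linear order ≺ on B, cr(≺) ≥ k·(k−1)/2. -/

import Mathlib

/-- Crossing count of a 2-layer drawing: the number of ordered pairs `(a, b)` of
bottom vertices with `b ≺ a`, `u ∈ Adj a` and `v ∈ Adj b`. -/
noncomputable def crossNum2 {T B : Type} (u v : T) (Adj : B → Set T)
    (lt : B → B → Prop) : ℕ :=
  {p : B × B | lt p.2 p.1 ∧ u ∈ Adj p.1 ∧ v ∈ Adj p.2}.ncard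

/-- Lower bound: every linear order on the bottom layer incurs at least
`k * (k - 1) / 2` crossings, where `k` is the number of common neighbors of the
two top vertices `u` and `v`. -/
theorem stmt1 {T B : Type} [Fintype B] (u v : T) (huv : u ≠ v)
    (Adj : B → Set T) (hsub : ∀ b, Adj b ⊆ {u, v})
    (k : ℕ) (hk : k = {b : B | Adj b = {u, v}}.ncard)
    (lt : B → B → Prop) (hlt : IsStrictTotalOrder B lt) :
    crossNum2 u v Adj lt ≥ k * (k - 1) / 2 := by
  classical
  -- the finset of common neighbors
  set s : Finset B := Finset.univ.filter (fun b => Adj b = {u, v}) with hs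
  have hks : k = s.card := by
    rw [hk]
    rw [Set.ncard_eq_toFinset_card']
    congr 1
    ext b
    simp [hs]
  -- facts about lt
  have hirr : ∀ a : B, ¬ lt a a := hlt.irrefl
  have htri : ∀ a b : B, lt a b ∨ a = b ∨ lt b a := by
    intro a b
    by_cases h1 : lt a b
    · exact Or.inl h1
    by_cases h2 : lt b a
    · exact Or.inr (Or.inr h2)
    exact Or.inr (Or.inl (hlt.trichotomous a b h1 h2))
  -- the crossing finset
  have hcross : crossNum2 u v Adj lt =
      (Finset.univ.filter
        (fun p : B × B => lt p.2 p.1 ∧ u ∈ Adj p.1 ∧ v ∈ Adj p.2)).card := by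
    rw [crossNum2, Set.ncard_eq_toFinset_card']
    congr 1
    ext p
    simp
  set X : Finset (B × B) := (s ×ˢ s).filter (fun p => lt p.2 p.1) with hX
  set Y : Finset (B × B) := (s ×ˢ s).filter (fun p => lt p.1 p.2) with hY
  have hXY : X.card = Y.card := by
    apply Finset.card_bij (fun p _ => Prod.swap p)
    · intro p hp
      simp only [hX, hY, Finset.mem_filter, Finset.mem_product] at *
      tauto
    · intro p hp q hq h
      exact Prod.swap_injective h
    · intro p hp
      refine ⟨Prod.swap p, ?_, by simp⟩
      simp only [hX, hY, Finset.mem_filter, Finset.mem_product] at *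
      tauto
  have hunion : X ∪ Y = s.offDiag := by
    ext p
    simp only [hX, hY, Finset.mem_union, Finset.mem_filter, Finset.mem_product,
      Finset.mem_offDiag]
    constructor
    · rintro (⟨⟨h1, h2⟩, h3⟩ | ⟨⟨h1, h2⟩, h3⟩)
      · exact ⟨h1, h2, fun he => hirr p.2 (he ▸ h3)⟩
      · exact ⟨h1, h2, fun he => hirr p.1 (he ▸ h3)⟩
    · rintro ⟨h1, h2, h3⟩
      rcases htri p.2 p.1 with h | h | h
      · exact Or.inl ⟨⟨h1, h2⟩, h⟩
      · exact absurd h.symm h3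
      · exact Or.inr ⟨⟨h1, h2⟩, h⟩
  have hdisj : Disjoint X Y := by
    rw [Finset.disjoint_left]
    intro p hp hq
    simp only [hX, hY, Finset.mem_filter] at hp hq
    exact hirr p.1 (hlt.toIsTrans.trans _ _ _ hq.2 hp.2)
  have hcard2 : X.card + Y.card = s.card * s.card - s.card := by
    rw [← Finset.card_union_of_disjoint hdisj, hunion, Finset.offDiag_card]
  have hXcard : X.card = k * (k - 1) / 2 := by
    have hmm : s.card * (s.card - 1) = s.card * s.card - s.card := by
      cases s.card <;> simp [Nat.mul_sub_one, Nat.succ_mul, Nat.mul_succ]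
    rw [hks]
    omega
  rw [hcross, ← hXcard]
  apply Finset.card_le_card
  intro p hp
  simp only [hX, Finset.mem_filter, Finset.mem_product, hs] at hp
  simp only [Finset.mem_filter, Finset.mem_univ, true_and]
  obtain ⟨⟨⟨-, h1⟩, -, h2⟩, h3⟩ := hp
  exact ⟨h3, h1 ▸ Set.mem_insert u {v}, h2 ▸ Set.mem_insert_of_mem u rfl⟩
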